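/- Let d ≥ 3 and let λ = 4k for some integer 1 ≤ k ≤ d-1. Let f : ℝ^d → ℂ be a ℤ^d-periodic continuously differentiable function such that f(ξ) = 0 for every ξ with h₀(ξ) = λ. Then ∫_{[-1/2,1/2]^d} |f(ξ)|² / (h₀(ξ) - λ)² dξ < ∞; i.e. (h₀ - λ)^{-1} f ∈ L² of the torus. -/

import Mathlib

open MeasureTheory


/-- The symbol `h₀(ξ) = 4 ∑_j sin²(π ξ_j)`, as a `ℤ^d`-periodic function on `ℝ^d`. -/
noncomputable def h0sym {d : ℕ} (ξ : Fin d → ℝ) : ℝ :=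
  4 * ∑ j, Real.sin (Real.pi * ξ j) ^ 2

noncomputable def mco (θ : ℝ) : ℝ := min (Real.sin (Real.pi*θ)^2) (Real.cos (Real.pi*θ)^2)

noncomputable def Hfun (θ : ℝ) : ℝ :=
  (θ^2) ^ (-(1/3):ℝ) + ((θ-1/2)^2) ^ (-(1/3):ℝ) + ((θ+1/2)^2) ^ (-(1/3):ℝ)

open Real Set in
section


lemma aux_sin_lb {θ : ℝ} (h0 : 0 ≤ θ) (h1 : θ ≤ 1/2) : 2*θ ≤ Real.sin (Real.pi * θ) := by
  have hpi := Real.pi_pos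
  have := Real.mul_le_sin (x := Real.pi * θ) (by positivity) (by nlinarith)
  calc 2*θ = 2/Real.pi * (Real.pi * θ) := by field_simp
  _ ≤ Real.sin (Real.pi * θ) := this

lemma aux_cos_lb {θ : ℝ} (h1 : |θ| ≤ 1/2) : 1 - 2*|θ| ≤ Real.cos (Real.pi * θ) := by
  have h2 : Real.cos (Real.pi * θ) = Real.cos (Real.pi * |θ|) := by
    rcases abs_cases θ with ⟨h, _⟩ | ⟨h, _⟩
    · rw [h]
    · rw [h]; simp [mul_neg, Real.cos_neg]
  have h3 : Real.pi * |θ| = Real.pi/2 - Real.pi * (1/2 - |θ|) := by ring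
  rw [h2, h3, Real.cos_pi_div_two_sub]
  have := aux_sin_lb (θ := 1/2 - |θ|) (by linarith) (by have := abs_nonneg θ; linarith)
  linarith

lemma aux_arcsin_le {t : ℝ} (h0 : 0 ≤ t) (h1 : t ≤ 1) : Real.arcsin t ≤ Real.pi/2 * t := by
  have hpi := Real.pi_pos
  have hs : t ≤ Real.sin (Real.pi/2 * t) := by
    have := Real.mul_le_sin (x := Real.pi/2 * t) (by positivity) (by nlinarith)
    calc t = 2/Real.pi * (Real.pi/2*t) := by field_simp
    _ ≤ _ := this
  calc Real.arcsin t ≤ Real.arcsin (Real.sin (Real.pi/2*t)) := Real.monotone_arcsin hs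
  _ = Real.pi/2*t := Real.arcsin_sin (by nlinarith) (by nlinarith)

lemma key_arcsin {a b : ℝ} (ha : 0 ≤ a) (hab : a ≤ b) (hb : b ≤ 1) :
    Real.arcsin (Real.sqrt b) - Real.arcsin (Real.sqrt a) ≤
      Real.pi/2 * ((Real.sqrt b - Real.sqrt a) + (Real.sqrt (1-a) - Real.sqrt (1-b))) := by
  set x := Real.sqrt b with hxdef
  set y := Real.sqrt a with hydef
  set c := Real.sqrt (1-b) with hcdef
  set dd := Real.sqrt (1-a) with hddef
  have hy0 : 0 ≤ y := Real.sqrt_nonneg _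
  have hc0 : 0 ≤ c := Real.sqrt_nonneg _
  have hyx : y ≤ x := Real.sqrt_le_sqrt hab
  have hx1 : x ≤ 1 := Real.sqrt_le_one.2 hb
  have hcd : c ≤ dd := Real.sqrt_le_sqrt (by linarith)
  have hd1 : dd ≤ 1 := Real.sqrt_le_one.2 (by linarith)
  have hy1 : y ≤ 1 := le_trans hyx hx1
  have hx2 : x^2 = b := Real.sq_sqrt (le_trans ha hab)
  have hy2 : y^2 = a := Real.sq_sqrt ha
  have hA2 : Real.arcsin x ≤ Real.pi/2 := Real.arcsin_le_pi_div_two x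
  have hB0 : 0 ≤ Real.arcsin y := Real.arcsin_nonneg.2 hy0
  have hBA : Real.arcsin y ≤ Real.arcsin x := Real.monotone_arcsin hyx
  have hsin : Real.sin (Real.arcsin x - Real.arcsin y) = x * dd - y * c := by
    rw [Real.sin_sub, Real.sin_arcsin (by linarith) hx1, Real.sin_arcsin (by linarith) hy1,
      Real.cos_arcsin, Real.cos_arcsin, hx2, hy2]
    rw [hcdef, hddef]
    ring
  have ht0 : 0 ≤ x * dd - y * c := by
    rw [← hsin]
    exact Real.sin_nonneg_of_nonneg_of_le_pi (by linarith) (by have := Real.pi_pos; linarith)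
  have ht1 : x * dd - y * c ≤ 1 := by rw [← hsin]; exact Real.sin_le_one _
  have heq : Real.arcsin x - Real.arcsin y = Real.arcsin (x * dd - y * c) := by
    rw [← hsin, Real.arcsin_sin (by linarith) (by linarith)]
  have hle : x * dd - y * c ≤ (x - y) + (dd - c) := by nlinarith [mul_le_mul (by linarith : 1 - x ≤ 1 - y) (by linarith : 1 - dd ≤ 1 - c) (by linarith) (by linarith)]
  calc Real.arcsin x - Real.arcsin y = Real.arcsin (x*dd - y*c) := heq
  _ ≤ Real.pi/2 * (x*dd - y*c) := aux_arcsin_le ht0 ht1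
  _ ≤ Real.pi/2 * ((x - y) + (dd - c)) := by
      have := Real.pi_pos
      apply mul_le_mul_of_nonneg_left hle (by positivity)

lemma sin_abs_eq {θ : ℝ} (h : |θ| ≤ 1/2) : Real.sin (Real.pi * |θ|) = |Real.sin (Real.pi * θ)| := by
  have hpi := Real.pi_pos
  rcases abs_cases θ with ⟨he, h0⟩ | ⟨he, h0⟩
  · rw [he, abs_of_nonneg]
    apply Real.sin_nonneg_of_nonneg_of_le_pi (by positivity)
    rw [he] at h; nlinarith
  · rw [he, mul_neg, Real.sin_neg, abs_of_nonpos]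
    have : Real.sin (Real.pi * -θ) ≥ 0 := by
      apply Real.sin_nonneg_of_nonneg_of_le_pi (by nlinarith)
      rw [he] at h; nlinarith
    rw [mul_neg] at this
    rw [Real.sin_neg] at this; linarith

lemma sin_sq_lb {θ : ℝ} (h : |θ| ≤ 1/2) : 4*θ^2 ≤ Real.sin (Real.pi * θ)^2 := by
  have h1 : 2*|θ| ≤ Real.sin (Real.pi * |θ|) := aux_sin_lb (abs_nonneg θ) h
  have h2 := sin_abs_eq h
  rw [h2] at h1
  calc 4*θ^2 = (2*|θ|)^2 := by rw [mul_pow, sq_abs]; ring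
  _ ≤ |Real.sin (Real.pi * θ)|^2 := by
      apply pow_le_pow_left₀ (by positivity) h1
  _ = _ := sq_abs _

lemma cos_sq_lb {θ : ℝ} (h : |θ| ≤ 1/2) : 4*(1/2 - |θ|)^2 ≤ Real.cos (Real.pi * θ)^2 := by
  have h1 := aux_cos_lb h
  have h2 : (0:ℝ) ≤ 1 - 2*|θ| := by linarith
  calc 4*(1/2-|θ|)^2 = (1-2*|θ|)^2 := by ring
  _ ≤ Real.cos (Real.pi*θ)^2 := by apply pow_le_pow_left₀ h2 h1

set_option maxHeartbeats 2000000 in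
lemma master (d k : ℕ) (hd : 3 ≤ d) (hkd : k ≤ d) (ξ : Fin d → ℝ)
    (hξ : ∀ j, |ξ j| ≤ 1/2)
    (i : Fin d) (hi : ∀ j, mco (ξ j) ≤ mco (ξ i)) :
    ∃ z : Fin d → ℝ, (∀ j, |z j| ≤ 1/2) ∧ h0sym z = 4*k ∧
      ‖ξ - z‖ * Real.sqrt (mco (ξ i)) ≤ 2*d*|(∑ j, Real.sin (Real.pi * ξ j)^2) - k| := by
  have hpi := Real.pi_pos
  set u : Fin d → ℝ := fun j => Real.sin (Real.pi * ξ j)^2 with hu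
  have hcos : ∀ j, Real.cos (Real.pi * ξ j)^2 = 1 - u j := by
    intro j
    have := Real.sin_sq_add_cos_sq (Real.pi * ξ j)
    simp only [hu]; linarith
  have hmco : ∀ j, mco (ξ j) = min (u j) (1 - u j) := by
    intro j; rw [mco, hcos j]
  set M := mco (ξ i) with hM
  set F := (∑ j, u j) - k with hF
  have hu0 : ∀ j, 0 ≤ u j := fun j => sq_nonneg _
  have hu1 : ∀ j, u j ≤ 1 := fun j => Real.sin_sq_le_one _
  have hMu : M ≤ u i := by rw [hM, hmco i]; exact min_le_left _ _
  have hM1u : M ≤ 1 - u i := by rw [hM, hmco i]; exact min_le_right _ _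
  have hM0 : 0 ≤ M := by rw [hM, hmco i]; exact le_min (hu0 i) (by linarith [hu1 i])
  have hM1 : M ≤ 1 := le_trans hMu (hu1 i)
  have hd0 : (0:ℝ) < d := by positivity
  have hd3 : (3:ℝ) ≤ d := by exact_mod_cast hd
  have hsqM1 : Real.sqrt M ≤ 1 := by
    rw [show (1:ℝ) = Real.sqrt 1 by simp]
    exact Real.sqrt_le_sqrt hM1
  -- the goal in terms of u
  show ∃ z : Fin d → ℝ, (∀ j, |z j| ≤ 1/2) ∧ h0sym z = 4*k ∧ ‖ξ - z‖ * Real.sqrt M ≤ 2*d*|F|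
  by_cases hbig : 1/(2*d) ≤ |F|
  · -- case (a)
    set z : Fin d → ℝ := fun j => if (j:ℕ) < k then (1/2:ℝ) else 0 with hz
    refine ⟨z, ?_, ?_, ?_⟩
    · intro j; rw [hz]; dsimp only; split <;> rw [abs_le] <;> norm_num
    · rw [h0sym]
      have h1 : ∀ j : Fin d, Real.sin (Real.pi * z j)^2
          = (if (j:ℕ) < k then (1:ℝ) else 0) := by
        intro j; rw [hz]; dsimp only; split
        · rw [show Real.pi * (1/2) = Real.pi/2 by ring, Real.sin_pi_div_two]; norm_num
        · norm_num
      rw [Finset.sum_congr rfl (fun j _ => h1 j), ← Finset.sum_filter]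
      rw [Finset.sum_const]
      have hcard : (Finset.univ.filter (fun j : Fin d => (j:ℕ) < k)).card = k := by
        rw [show (Finset.univ.filter (fun j : Fin d => (j:ℕ) < k))
            = Finset.attachFin (Finset.range k) (fun m hm => lt_of_lt_of_le (Finset.mem_range.1 hm) hkd) by
          ext a; simp]
        simp
      rw [hcard]; simp
    · have hnorm : ‖ξ - z‖ ≤ 1 := by
        rw [pi_norm_le_iff_of_nonneg (by norm_num : (0:ℝ) ≤ 1)]
        intro j
        rw [Pi.sub_apply, Real.norm_eq_abs, hz]
        have := abs_le.1 (hξ j)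
        dsimp only; rw [abs_le]
        constructor <;> (split <;> push_cast <;> norm_num <;> linarith [this.1, this.2])
      calc ‖ξ - z‖ * Real.sqrt M ≤ 1 * 1 :=
            mul_le_mul hnorm hsqM1 (Real.sqrt_nonneg _) (by norm_num)
      _ = 2*d*(1/(2*d)) := by field_simp
      _ ≤ 2*d*|F| := by apply mul_le_mul_of_nonneg_left hbig (by positivity)
  · push_neg at hbig
    by_cases hMF : M < |F|
    · -- case (b)
      set z : Fin d → ℝ := fun j => if 1/2 < u j then (if ξ j < 0 then -(1/2:ℝ) else 1/2) else 0 with hz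
      have hz12 : ∀ j, |z j| ≤ 1/2 := by
        intro j; rw [hz]; dsimp only
        split
        · split <;> rw [abs_le] <;> norm_num
        · rw [abs_le]; norm_num
      have hsinz : ∀ j : Fin d, Real.sin (Real.pi * z j)^2 = (if 1/2 < u j then (1:ℝ) else 0) := by
        intro j; rw [hz]; dsimp only
        split
        · split
          · rw [mul_neg, Real.sin_neg, show Real.pi * (1/2) = Real.pi/2 by ring,
              Real.sin_pi_div_two]; norm_num
          · rw [show Real.pi * (1/2) = Real.pi/2 by ring, Real.sin_pi_div_two]; norm_num
        · norm_num
      set m := (Finset.univ.filter (fun j : Fin d => 1/2 < u j)).card with hm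
      have hsumz : ∑ j, Real.sin (Real.pi * z j)^2 = m := by
        rw [Finset.sum_congr rfl (fun j _ => hsinz j), ← Finset.sum_filter, Finset.sum_const, hm]
        simp
      have hsumite : ∑ j : Fin d, (if 1/2 < u j then (1:ℝ) else 0) = m := by
        rw [← Finset.sum_filter, Finset.sum_const, hm]; simp
      have hup : ∀ j, u j ≤ (if 1/2 < u j then (1:ℝ) else 0) + M := by
        intro j
        have hj := hi j; rw [hmco j] at hj
        split
        · linarith [hu1 j]
        · rename_i hle; push_neg at hle
          rw [min_eq_left (by linarith)] at hj; linarith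
      have hlo : ∀ j, (if 1/2 < u j then (1:ℝ) else 0) - M ≤ u j := by
        intro j
        have hj := hi j; rw [hmco j] at hj
        split
        · rename_i hgt
          rw [min_eq_right (by linarith)] at hj; linarith
        · linarith [hu0 j]
      have hsum_up : ∑ j, u j ≤ m + d*M := by
        calc ∑ j, u j ≤ ∑ j : Fin d, ((if 1/2 < u j then (1:ℝ) else 0) + M) :=
              Finset.sum_le_sum (fun j _ => hup j)
        _ = m + d*M := by
            rw [Finset.sum_add_distrib, hsumite, Finset.sum_const, Finset.card_univ,
              Fintype.card_fin, nsmul_eq_mul]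
      have hsum_lo : (m:ℝ) - d*M ≤ ∑ j, u j := by
        calc (m:ℝ) - d*M = ∑ j : Fin d, ((if 1/2 < u j then (1:ℝ) else 0) - M) := by
              rw [Finset.sum_sub_distrib, hsumite, Finset.sum_const, Finset.card_univ,
                Fintype.card_fin, nsmul_eq_mul]
        _ ≤ ∑ j, u j := Finset.sum_le_sum (fun j _ => hlo j)
      have hmk : m = k := by
        have habs : |(m:ℝ) - k| < 1 := by
          have h1 : |(m:ℝ) - (∑ j, u j)| ≤ d*M := by
            rw [abs_le]; constructor <;> linarith
          have h2 : |(m:ℝ) - k| ≤ d*M + |F| := by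
            have : (m:ℝ) - k = ((m:ℝ) - (∑ j, u j)) + F := by rw [hF]; ring
            rw [this]
            exact le_trans (abs_add_le _ _) (by linarith [h1])
          have h3 : d*M < d*|F| := by
            apply mul_lt_mul_of_pos_left hMF hd0
          have h4 : (d:ℝ)*|F| + |F| < (d+1)*(1/(2*d)) := by
            nlinarith [abs_nonneg F]
          have h5 : ((d:ℝ)+1)*(1/(2*d)) ≤ 1 := by
            have hd3 : (3:ℝ) ≤ d := by exact_mod_cast hd
            rw [mul_one_div, div_le_one (by positivity)]
            linarith
          linarith
        rw [abs_lt] at habs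
        have hx1 : m < k + 1 := by exact_mod_cast (by push_cast; linarith : (m:ℝ) < k + 1)
        have hx2 : k < m + 1 := by exact_mod_cast (by push_cast; linarith : (k:ℝ) < m + 1)
        omega
      have hdist : ∀ j, |ξ j - z j| ≤ Real.sqrt M / 2 := by
        intro j
        have hj := hi j; rw [hmco j] at hj
        rw [hz]; dsimp only
        split
        · rename_i hgt
          rw [min_eq_right (by linarith)] at hj
          have h4 : 4*(1/2 - |ξ j|)^2 ≤ 1 - u j := by
            rw [← hcos j]; exact cos_sq_lb (hξ j)
          have h5 : 2*(1/2 - |ξ j|) ≤ Real.sqrt M := by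
            have := Real.sqrt_le_sqrt (le_trans h4 hj)
            rwa [show 4*(1/2 - |ξ j|)^2 = (2*(1/2 - |ξ j|))^2 by ring, Real.sqrt_sq_eq_abs,
              abs_of_nonneg (by linarith [hξ j])] at this
          have hxj := abs_le.1 (hξ j)
          split
          · rename_i hneg
            rw [abs_of_nonneg (by linarith : (0:ℝ) ≤ ξ j - -(1/2))]
            rw [abs_of_neg hneg] at h5
            linarith
          · rename_i hneg; push_neg at hneg
            rw [abs_of_nonpos (by linarith : ξ j - 1/2 ≤ 0)]
            rw [abs_of_nonneg hneg] at h5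
            linarith
        · rename_i hle; push_neg at hle
          rw [min_eq_left (by linarith)] at hj
          have h4 : 4*(ξ j)^2 ≤ u j := sin_sq_lb (hξ j)
          have h5 : 2*|ξ j| ≤ Real.sqrt M := by
            have := Real.sqrt_le_sqrt (le_trans h4 hj)
            rwa [show 4*(ξ j)^2 = (2*(ξ j))^2 by ring, Real.sqrt_sq_eq_abs, abs_mul,
              abs_two] at this
          rw [sub_zero]; linarith
      refine ⟨z, hz12, ?_, ?_⟩
      · rw [h0sym, hsumz, hmk]
      · have hnorm : ‖ξ - z‖ ≤ Real.sqrt M / 2 := by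
          rw [pi_norm_le_iff_of_nonneg (by positivity)]
          intro j; rw [Pi.sub_apply, Real.norm_eq_abs]; exact hdist j
        calc ‖ξ - z‖ * Real.sqrt M ≤ (Real.sqrt M / 2) * Real.sqrt M :=
              mul_le_mul_of_nonneg_right hnorm (Real.sqrt_nonneg _)
        _ = M / 2 := by rw [div_mul_eq_mul_div, Real.mul_self_sqrt hM0]
        _ ≤ 2*d*|F| := by nlinarith [abs_nonneg F, hMF, hd3]
    · -- case (c): |F| ≤ M
      push_neg at hMF
      have hFle : F ≤ M := le_trans (le_abs_self F) hMF
      have hFge : -F ≤ M := le_trans (neg_le_abs F) hMF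
      set v := u i - F with hv
      have hv0 : 0 ≤ v := by rw [hv]; linarith [hMu]
      have hv1 : v ≤ 1 := by rw [hv]; linarith [hM1u]
      set Av := Real.arcsin (Real.sqrt v) with hAv
      have hAv0 : 0 ≤ Av := Real.arcsin_nonneg.2 (Real.sqrt_nonneg _)
      have hAv2 : Av ≤ Real.pi/2 := Real.arcsin_le_pi_div_two _
      set Au := Real.arcsin (Real.sqrt (u i)) with hAu
      have hAu0 : 0 ≤ Au := Real.arcsin_nonneg.2 (Real.sqrt_nonneg _)
      have hAu2 : Au ≤ Real.pi/2 := Real.arcsin_le_pi_div_two _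
      set w := (if ξ i < 0 then (-1:ℝ) else 1) * (Av / Real.pi) with hw
      set z := Function.update ξ i w with hz
      have hw12 : |w| ≤ 1/2 := by
        rw [hw, abs_mul, abs_div, abs_of_nonneg hAv0, abs_of_nonneg (le_of_lt hpi)]
        have h1 : |if ξ i < 0 then (-1:ℝ) else 1| = 1 := by split <;> norm_num
        rw [h1, one_mul, div_le_iff₀ hpi]
        linarith
      have hz12 : ∀ j, |z j| ≤ 1/2 := by
        intro j
        rcases eq_or_ne j i with rfl | hne
        · rw [hz, Function.update_self]; exact hw12
        · rw [hz, Function.update_of_ne hne]; exact hξ j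
      have hsinw : Real.sin (Real.pi * w)^2 = v := by
        have hπw : Real.pi * w = (if ξ i < 0 then (-1:ℝ) else 1) * Av := by
          rw [hw]; field_simp
        rw [hπw]
        have hsa : Real.sin Av = Real.sqrt v :=
          Real.sin_arcsin (by linarith [Real.sqrt_nonneg v]) (Real.sqrt_le_one.2 hv1)
        split
        · rw [neg_one_mul, Real.sin_neg, hsa, neg_pow, Real.sq_sqrt hv0]; ring
        · rw [one_mul, hsa, Real.sq_sqrt hv0]
      refine ⟨z, hz12, ?_, ?_⟩
      · rw [h0sym]
        have hfun : (fun j => Real.sin (Real.pi * z j)^2) = Function.update u i v := by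
          funext j
          rcases eq_or_ne j i with rfl | hne
          · rw [hz, Function.update_self, Function.update_self, hsinw]
          · rw [hz, Function.update_of_ne hne, Function.update_of_ne hne]
        have h1 : ∑ j, Real.sin (Real.pi * z j)^2 = ∑ j, Function.update u i v j := by
          rw [hfun]
        rw [h1, Finset.sum_update_of_mem (Finset.mem_univ i)]
        have h2 : ∑ j, u j = ∑ j ∈ Finset.univ \ {i}, u j + u i :=
          Finset.sum_eq_sum_sdiff_singleton_add (Finset.mem_univ i) u
        have h3 : (∑ j, u j) = F + k := by rw [hF]; ring
        have h4 : ∑ j ∈ Finset.univ \ {i}, u j = F + k - u i := by rw [← h3, h2]; ring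
        rw [h4, hv]; ring
      · -- distance bound
        set lo := min (u i) v with hlo
        set hi2 := max (u i) v with hhi2
        have hlo0 : 0 ≤ lo := le_min (hu0 i) hv0
        have hhi1 : hi2 ≤ 1 := max_le (hu1 i) hv1
        have hlohi : lo ≤ hi2 := min_le_max
        have hdiff : hi2 - lo = |F| := by
          have huv : v - u i = -F := by rw [hv]; ring
          rw [hhi2, hlo, max_sub_min_eq_abs, huv, abs_neg]
        have hMhi : M ≤ hi2 := le_trans hMu (le_max_left _ _)
        have hMlo : M ≤ 1 - lo := le_trans hM1u (by
          have : lo ≤ u i := min_le_left _ _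
          linarith)
        have hkey := key_arcsin hlo0 hlohi hhi1
        -- multiply through by sqrt M
        have hsq1 : (Real.sqrt hi2 - Real.sqrt lo) * Real.sqrt M ≤ hi2 - lo := by
          have e1 : Real.sqrt M ≤ Real.sqrt hi2 := Real.sqrt_le_sqrt hMhi
          have e2 : (0:ℝ) ≤ Real.sqrt hi2 - Real.sqrt lo := by
            linarith [Real.sqrt_le_sqrt hlohi]
          calc (Real.sqrt hi2 - Real.sqrt lo) * Real.sqrt M
              ≤ (Real.sqrt hi2 - Real.sqrt lo) * Real.sqrt hi2 :=
                mul_le_mul_of_nonneg_left e1 e2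
          _ = hi2 - Real.sqrt lo * Real.sqrt hi2 := by
                rw [sub_mul, Real.mul_self_sqrt (le_trans hlo0 hlohi)]
          _ ≤ hi2 - lo := by
                have : lo ≤ Real.sqrt lo * Real.sqrt hi2 := by
                  calc lo = Real.sqrt lo * Real.sqrt lo := (Real.mul_self_sqrt hlo0).symm
                  _ ≤ Real.sqrt lo * Real.sqrt hi2 :=
                      mul_le_mul_of_nonneg_left (Real.sqrt_le_sqrt hlohi) (Real.sqrt_nonneg _)
                linarith
        have hsq2 : (Real.sqrt (1-lo) - Real.sqrt (1-hi2)) * Real.sqrt M ≤ hi2 - lo := by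
          have e1 : Real.sqrt M ≤ Real.sqrt (1-lo) := Real.sqrt_le_sqrt hMlo
          have e2 : (0:ℝ) ≤ Real.sqrt (1-lo) - Real.sqrt (1-hi2) := by
            linarith [Real.sqrt_le_sqrt (by linarith : 1-hi2 ≤ 1-lo)]
          calc (Real.sqrt (1-lo) - Real.sqrt (1-hi2)) * Real.sqrt M
              ≤ (Real.sqrt (1-lo) - Real.sqrt (1-hi2)) * Real.sqrt (1-lo) :=
                mul_le_mul_of_nonneg_left e1 e2
          _ = (1-lo) - Real.sqrt (1-hi2) * Real.sqrt (1-lo) := by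
                rw [sub_mul, Real.mul_self_sqrt (by linarith)]
          _ ≤ (1-lo) - (1-hi2) := by
                have : (1-hi2) ≤ Real.sqrt (1-hi2) * Real.sqrt (1-lo) := by
                  calc (1-hi2) = Real.sqrt (1-hi2) * Real.sqrt (1-hi2) :=
                        (Real.mul_self_sqrt (by linarith)).symm
                  _ ≤ Real.sqrt (1-hi2) * Real.sqrt (1-lo) :=
                      mul_le_mul_of_nonneg_left (Real.sqrt_le_sqrt (by linarith)) (Real.sqrt_nonneg _)
                linarith
          _ = hi2 - lo := by ring
        have hmain : (Real.arcsin (Real.sqrt hi2) - Real.arcsin (Real.sqrt lo)) * Real.sqrt M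
            ≤ Real.pi * |F| := by
          have h0 : 0 ≤ Real.sqrt M := Real.sqrt_nonneg _
          calc (Real.arcsin (Real.sqrt hi2) - Real.arcsin (Real.sqrt lo)) * Real.sqrt M
              ≤ (Real.pi/2 * ((Real.sqrt hi2 - Real.sqrt lo)
                  + (Real.sqrt (1-lo) - Real.sqrt (1-hi2)))) * Real.sqrt M :=
                mul_le_mul_of_nonneg_right hkey h0
          _ = Real.pi/2 * ((Real.sqrt hi2 - Real.sqrt lo) * Real.sqrt M
                  + (Real.sqrt (1-lo) - Real.sqrt (1-hi2)) * Real.sqrt M) := by ring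
          _ ≤ Real.pi/2 * ((hi2 - lo) + (hi2 - lo)) := by
                apply mul_le_mul_of_nonneg_left (by linarith) (by positivity)
          _ = Real.pi * (hi2 - lo) := by ring
          _ = Real.pi * |F| := by rw [hdiff]
        -- |ξ i - w| in terms of arcsin
        have harc : Real.pi * |ξ i| = Au := by
          have e1 : Real.sqrt (u i) = Real.sin (Real.pi * |ξ i|) := by
            rw [hu]; dsimp only
            rw [Real.sqrt_sq_eq_abs, sin_abs_eq (hξ i)]
          have hb1 : -(Real.pi/2) ≤ Real.pi * |ξ i| := by nlinarith [abs_nonneg (ξ i)]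
          have hb2 : Real.pi * |ξ i| ≤ Real.pi/2 := by nlinarith [hξ i, abs_nonneg (ξ i)]
          rw [hAu, e1, Real.arcsin_sin hb1 hb2]
        have hAuv : |Au - Av| = Real.arcsin (Real.sqrt hi2) - Real.arcsin (Real.sqrt lo) := by
          rcases le_total (u i) v with hcase | hcase
          · rw [hlo, min_eq_left hcase, hhi2, max_eq_right hcase,
              abs_of_nonpos (by linarith [Real.monotone_arcsin (Real.sqrt_le_sqrt hcase)] : Au - Av ≤ 0)]
            ring
          · rw [hlo, min_eq_right hcase, hhi2, max_eq_left hcase,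
              abs_of_nonneg (by linarith [Real.monotone_arcsin (Real.sqrt_le_sqrt hcase)] : 0 ≤ Au - Av)]
        have hxiw : |ξ i - w| = |Au - Av| / Real.pi := by
          have hxi : ξ i = (if ξ i < 0 then (-1:ℝ) else 1) * (Au / Real.pi) := by
            rw [← harc]
            split
            · rename_i hneg
              rw [abs_of_neg hneg]; field_simp
            · rename_i hpos; push_neg at hpos
              rw [abs_of_nonneg hpos]; field_simp
          have h1 : |if ξ i < 0 then (-1:ℝ) else 1| = 1 := by split <;> norm_num
          rw [hw]
          nth_rewrite 1 [hxi]
          rw [← mul_sub, abs_mul, h1, one_mul, div_sub_div_same, abs_div,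
            abs_of_nonneg (le_of_lt hpi)]
        have hnorm : ‖ξ - z‖ ≤ |ξ i - w| := by
          rw [pi_norm_le_iff_of_nonneg (abs_nonneg _)]
          intro j
          rcases eq_or_ne j i with rfl | hne
          · rw [Pi.sub_apply, Real.norm_eq_abs, hz, Function.update_self]
          · rw [Pi.sub_apply, Real.norm_eq_abs, hz, Function.update_of_ne hne]
            simp [abs_nonneg]
        calc ‖ξ - z‖ * Real.sqrt M ≤ |ξ i - w| * Real.sqrt M :=
              mul_le_mul_of_nonneg_right hnorm (Real.sqrt_nonneg _)
        _ = (|Au - Av| * Real.sqrt M) / Real.pi := by rw [hxiw]; ring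
        _ ≤ (Real.pi * |F|) / Real.pi := by
              rw [hAuv]
              gcongr

        _ = |F| := by field_simp
        _ ≤ 2*d*|F| := by nlinarith [abs_nonneg F]


lemma aux_even_int (a b : ℝ) :
    IntervalIntegrable (fun x : ℝ => (x^2) ^ (-(1/3):ℝ)) volume a b := by
  suffices h : ∀ c : ℝ, IntervalIntegrable (fun x : ℝ => (x^2) ^ (-(1/3):ℝ)) volume 0 c by
    exact (h a).symm.trans (h b)
  have hpos : ∀ c : ℝ, 0 ≤ c → IntervalIntegrable (fun x : ℝ => (x^2) ^ (-(1/3):ℝ)) volume 0 c := by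
    intro c hc
    have hbase : IntervalIntegrable (fun x : ℝ => x ^ (-(2/3):ℝ)) volume 0 c :=
      intervalIntegral.intervalIntegrable_rpow' (by norm_num)
    rw [intervalIntegrable_iff, uIoc_of_le hc] at hbase ⊢
    apply hbase.congr_fun ?_ measurableSet_Ioc
    intro x hx
    dsimp only
    rw [← Real.rpow_natCast (x := x) (n := 2), ← Real.rpow_mul (le_of_lt hx.1)]
    norm_num
  intro c
  rcases le_total 0 c with hc | hc
  · exact hpos c hc
  · have := (hpos (-c) (by linarith)).symm
    rw [IntervalIntegrable.iff_comp_neg] at this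
    simpa using this.symm


lemma Hfun_integrable : IntegrableOn Hfun (Icc (-(1/2):ℝ) (1/2)) volume := by
  have h1 := aux_even_int (-(1/2):ℝ) (1/2)
  have h2 := (aux_even_int (-1) 0).comp_sub_right (1/2)
  have h3 := (aux_even_int 0 1).comp_add_right (1/2)
  rw [show (-1:ℝ) + 1/2 = -(1/2) by norm_num, show (0:ℝ) + 1/2 = (1/2:ℝ) by norm_num] at h2
  rw [show (0:ℝ) - 1/2 = -(1/2) by norm_num, show (1:ℝ) - 1/2 = (1/2:ℝ) by norm_num] at h3
  have hsum : IntervalIntegrable Hfun volume (-(1/2)) (1/2) := (h1.add h2).add h3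
  rw [integrableOn_Icc_iff_integrableOn_Ioc]
  rwa [intervalIntegrable_iff_integrableOn_Ioc_of_le (by norm_num)] at hsum

lemma Hfun_nonneg (θ : ℝ) : 0 ≤ Hfun θ := by
  unfold Hfun; positivity

lemma mco_pos {θ : ℝ} (hθ : |θ| ≤ 1/2) (h0 : θ ≠ 0) (hp : θ ≠ 1/2) (hm : θ ≠ -(1/2)) :
    0 < mco θ := by
  have h1 : 0 < θ^2 := lt_of_le_of_ne (sq_nonneg θ) (Ne.symm (pow_ne_zero 2 h0))
  have h2 : |θ| < 1/2 := by
    rcases lt_or_eq_of_le hθ with h | h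
    · exact h
    · rcases (abs_eq (by norm_num : (0:ℝ) ≤ 1/2)).1 h with he | he
      · exact absurd he hp
      · exact absurd he hm
  apply lt_min
  · calc (0:ℝ) < 4*θ^2 := by linarith
    _ ≤ _ := sin_sq_lb hθ
  · calc (0:ℝ) < 4*(1/2-|θ|)^2 := by nlinarith [abs_nonneg θ]
    _ ≤ _ := cos_sq_lb hθ

lemma mco_inv_le {θ : ℝ} (hθ : |θ| ≤ 1/2) (h0 : θ ≠ 0) (hp : θ ≠ 1/2) (hm : θ ≠ -(1/2)) :
    (mco θ) ^ (-(1/3):ℝ) ≤ Hfun θ := by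
  have ht1 : 0 < θ^2 := lt_of_le_of_ne (sq_nonneg θ) (Ne.symm (pow_ne_zero 2 h0))
  have ht2 : 0 < (θ - 1/2)^2 :=
    lt_of_le_of_ne (sq_nonneg _) (Ne.symm (pow_ne_zero 2 (sub_ne_zero.2 hp)))
  have ht3 : 0 < (θ + 1/2)^2 := by
    have : θ + 1/2 ≠ 0 := fun h => hm (by linarith [h])
    exact lt_of_le_of_ne (sq_nonneg _) (Ne.symm (pow_ne_zero 2 this))
  set m3 := min (θ^2) (min ((θ-1/2)^2) ((θ+1/2)^2)) with hm3
  have hm3pos : 0 < m3 := lt_min ht1 (lt_min ht2 ht3)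
  have hm3le : m3 ≤ mco θ := by
    apply le_min
    · calc m3 ≤ θ^2 := min_le_left _ _
      _ ≤ 4*θ^2 := by nlinarith [sq_nonneg θ]
      _ ≤ _ := sin_sq_lb hθ
    · have habs : (1/2 - |θ|)^2 = (θ-1/2)^2 ∨ (1/2 - |θ|)^2 = (θ+1/2)^2 := by
        rcases abs_cases θ with ⟨he, _⟩ | ⟨he, _⟩
        · left; rw [he]; ring
        · right; rw [he]; ring
      have h1 : m3 ≤ (1/2 - |θ|)^2 := by
        rcases habs with he | he
        · rw [he]; exact le_trans (min_le_right _ _) (min_le_left _ _)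
        · rw [he]; exact le_trans (min_le_right _ _) (min_le_right _ _)
      calc m3 ≤ (1/2 - |θ|)^2 := h1
      _ ≤ 4*(1/2 - |θ|)^2 := by nlinarith [sq_nonneg (1/2 - |θ|)]
      _ ≤ _ := cos_sq_lb hθ
  calc (mco θ) ^ (-(1/3):ℝ) ≤ m3 ^ (-(1/3):ℝ) :=
        Real.rpow_le_rpow_of_nonpos hm3pos hm3le (by norm_num)
  _ ≤ Hfun θ := by
      rcases min_cases (θ^2) (min ((θ-1/2)^2) ((θ+1/2)^2)) with ⟨he, _⟩ | ⟨he, _⟩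
      · rw [hm3, he]
        unfold Hfun
        have := Real.rpow_nonneg (sq_nonneg (θ-1/2)) (-(1/3):ℝ)
        have := Real.rpow_nonneg (sq_nonneg (θ+1/2)) (-(1/3):ℝ)
        linarith
      · rcases min_cases ((θ-1/2)^2) ((θ+1/2)^2) with ⟨he2, _⟩ | ⟨he2, _⟩
        · rw [hm3, he, he2]
          unfold Hfun
          have := Real.rpow_nonneg (sq_nonneg θ) (-(1/3):ℝ)
          have := Real.rpow_nonneg (sq_nonneg (θ+1/2)) (-(1/3):ℝ)
          linarith
        · rw [hm3, he, he2]
          unfold Hfun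
          have := Real.rpow_nonneg (sq_nonneg θ) (-(1/3):ℝ)
          have := Real.rpow_nonneg (sq_nonneg (θ-1/2)) (-(1/3):ℝ)
          linarith

lemma majorant_integrable (d : ℕ) :
    IntegrableOn (fun ξ : Fin d → ℝ => ∏ j : Fin d, (if (j:ℕ) < 3 then Hfun (ξ j) else 1))
      (Set.Icc (fun _ : Fin d => -(1 / 2 : ℝ)) (fun _ => 1 / 2)) volume := by
  set g : Fin d → ℝ → ℝ :=
    fun j => (Icc (-(1/2):ℝ) (1/2)).indicator (fun t => if (j:ℕ) < 3 then Hfun t else 1) with hg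
  have hgint : ∀ j, Integrable (g j) volume := by
    intro j
    rw [hg]; dsimp only
    rw [integrable_indicator_iff measurableSet_Icc]
    split
    · exact Hfun_integrable
    · refine integrableOn_const ?_
      rw [Real.volume_Icc]
      norm_num
  have hprod : Integrable (fun ξ : Fin d → ℝ => ∏ j, g j (ξ j)) volume :=
    Integrable.fintype_prod (𝕜 := ℝ) hgint
  apply (hprod.integrableOn).congr_fun ?_ measurableSet_Icc
  intro ξ hξ
  have hmem : ∀ j, ξ j ∈ Icc (-(1/2):ℝ) (1/2) := by
    intro j
    rw [Set.mem_Icc] at hξ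
    exact ⟨hξ.1 j, hξ.2 j⟩
  dsimp only
  apply Finset.prod_congr rfl
  intro j _
  rw [hg]; dsimp only
  rw [Set.indicator_of_mem (hmem j)]


end


set_option maxHeartbeats 2000000 in
theorem statement13 (d k : ℕ) (hd : 3 ≤ d) (hk1 : 1 ≤ k) (hkd : k ≤ d - 1)
    (lam : ℝ) (hlam : lam = 4 * k)
    (f : (Fin d → ℝ) → ℂ) (hf : ContDiff ℝ 1 f)
    (hper : ∀ (ξ : Fin d → ℝ) (n : Fin d → ℤ), f (ξ + fun j => (n j : ℝ)) = f ξ)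
    (hvanish : ∀ ξ, h0sym ξ = lam → f ξ = 0) :
    IntegrableOn (fun ξ => ‖f ξ‖ ^ 2 / (h0sym ξ - lam) ^ 2)
      (Set.Icc (fun _ : Fin d => -(1 / 2 : ℝ)) (fun _ => 1 / 2)) volume := by
  have hkd' : k ≤ d := le_trans hkd (Nat.sub_le d 1)
  set cube : Set (Fin d → ℝ) := Set.Icc (fun _ : Fin d => -(1 / 2 : ℝ)) (fun _ => 1 / 2) with hcube
  have hcube_pi : cube = Set.pi Set.univ (fun _ : Fin d => Set.Icc (-(1/2):ℝ) (1/2)) := by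
    rw [hcube, Set.pi_univ_Icc]
  have hK : IsCompact cube := by
    rw [hcube_pi]; exact isCompact_univ_pi (fun i => isCompact_Icc)
  have hconv : Convex ℝ cube := by
    rw [hcube_pi]; exact convex_pi (fun i _ => convex_Icc _ _)
  have hmemcube : ∀ {ξ : Fin d → ℝ}, ξ ∈ cube ↔ ∀ j, |ξ j| ≤ 1/2 := by
    intro ξ
    rw [hcube, Set.mem_Icc]
    constructor
    · rintro ⟨h1, h2⟩ j; rw [abs_le]; exact ⟨h1 j, h2 j⟩
    · intro h; exact ⟨fun j => (abs_le.1 (h j)).1, fun j => (abs_le.1 (h j)).2⟩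
  have h0ne : cube.Nonempty := ⟨fun _ => 0, hmemcube.2 (fun j => by norm_num)⟩
  -- Lipschitz bound
  have hfd : Continuous fun x => ‖fderiv ℝ f x‖ := (hf.continuous_fderiv one_ne_zero).norm
  obtain ⟨x₀, hx₀mem, hx₀⟩ := hK.exists_isMaxOn h0ne hfd.continuousOn
  set L := ‖fderiv ℝ f x₀‖ with hL
  have hL0 : 0 ≤ L := norm_nonneg _
  have hlipest : ∀ ξ ∈ cube, ∀ z ∈ cube, h0sym z = lam → ‖f ξ‖ ≤ L * ‖ξ - z‖ := by
    intro ξ hξ z hz hz0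
    have h1 : ‖f ξ - f z‖ ≤ L * ‖ξ - z‖ :=
      hconv.norm_image_sub_le_of_norm_fderiv_le
        (fun x _ => (hf.differentiable one_ne_zero).differentiableAt)
        (fun x hx => hx₀ hx) hz hξ
    rwa [hvanish z hz0, sub_zero] at h1
  -- null set of bad coordinates
  set bad : Set (Fin d → ℝ) := {ξ | ∃ j, ξ j = 0 ∨ ξ j = 1/2 ∨ ξ j = -(1/2)} with hbad
  have hbadnull : volume bad = 0 := by
    have : bad = ⋃ j : Fin d,
        ({ξ : Fin d → ℝ | ξ j = 0} ∪ ({ξ : Fin d → ℝ | ξ j = 1/2} ∪ {ξ : Fin d → ℝ | ξ j = -(1/2)})) := by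
      ext ξ; simp [hbad]
    rw [this]
    apply measure_iUnion_null
    intro j
    apply measure_union_null
    · rw [volume_pi]; exact MeasureTheory.Measure.pi_hyperplane _ j 0
    · apply measure_union_null <;> rw [volume_pi]
      · exact MeasureTheory.Measure.pi_hyperplane _ j (1/2)
      · exact MeasureTheory.Measure.pi_hyperplane _ j (-(1/2))
  -- measurability
  have hcont0 : Continuous (h0sym (d := d)) := by
    unfold h0sym
    apply continuous_const.mul
    apply continuous_finset_sum
    intro j _
    exact (Real.continuous_sin.comp (continuous_const.mul (continuous_apply j))).pow 2
  have hmeas : AEStronglyMeasurable (fun ξ => ‖f ξ‖ ^ 2 / (h0sym ξ - lam) ^ 2)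
      (volume.restrict cube) := by
    apply Measurable.aestronglyMeasurable
    apply Measurable.div
    · exact ((hf.continuous.norm).pow 2).measurable
    · exact (((hcont0.sub continuous_const).pow 2)).measurable
  -- the constant
  set C : ℝ := L^2 * d^2 / 4 with hC
  have hC0 : 0 ≤ C := by positivity
  -- the filter set S with card 3
  set S : Finset (Fin d) := Finset.univ.filter (fun j : Fin d => (j:ℕ) < 3) with hS
  have hScard : S.card = 3 := by
    rw [hS, show (Finset.univ.filter (fun j : Fin d => (j:ℕ) < 3))
        = Finset.attachFin (Finset.range 3) (fun m hm => lt_of_lt_of_le (Finset.mem_range.1 hm) hd) by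
      ext a; simp]
    simp
  -- main comparison
  rw [IntegrableOn]
  apply Integrable.mono' (((majorant_integrable d).const_mul C))
  · exact hmeas
  · rw [ae_restrict_iff' measurableSet_Icc]
    filter_upwards [measure_eq_zero_iff_ae_notMem.mp hbadnull] with ξ hnb hcubeξ
    have hξ : ∀ j, |ξ j| ≤ 1/2 := hmemcube.1 hcubeξ
    have hnbj : ∀ j, ξ j ≠ 0 ∧ ξ j ≠ 1/2 ∧ ξ j ≠ -(1/2) := by
      intro j
      refine ⟨?_, ?_, ?_⟩ <;> intro h <;> exact hnb ⟨j, by tauto⟩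
    have hmcopos : ∀ j, 0 < mco (ξ j) := fun j =>
      mco_pos (hξ j) (hnbj j).1 (hnbj j).2.1 (hnbj j).2.2
    obtain ⟨i, _, hi⟩ := Finset.exists_max_image Finset.univ (fun j => mco (ξ j))
      ⟨⟨0, by omega⟩, Finset.mem_univ _⟩
    have hi' : ∀ j, mco (ξ j) ≤ mco (ξ i) := fun j => hi j (Finset.mem_univ j)
    set M := mco (ξ i) with hM
    have hMpos : 0 < M := hmcopos i
    set F : ℝ := (∑ j, Real.sin (Real.pi * ξ j)^2) - k with hF
    have hden : h0sym ξ - lam = 4 * F := by rw [h0sym, hlam, hF]; ring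
    -- nonnegativity of both sides
    have hnonneg : 0 ≤ ‖f ξ‖ ^ 2 / (h0sym ξ - lam) ^ 2 := by positivity
    rw [Real.norm_eq_abs, abs_of_nonneg hnonneg]
    -- prod bound
    have hprod_le : M⁻¹ ≤ ∏ j : Fin d, (if (j:ℕ) < 3 then Hfun (ξ j) else 1) := by
      rw [← Finset.prod_filter, ← hS]
      have step1 : ∀ j ∈ S, M ^ (-(1/3):ℝ) ≤ mco (ξ j) ^ (-(1/3):ℝ) := fun j _ =>
        Real.rpow_le_rpow_of_nonpos (hmcopos j) (hi' j) (by norm_num)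
      have step2 : ∀ j ∈ S, mco (ξ j) ^ (-(1/3):ℝ) ≤ Hfun (ξ j) := fun j _ =>
        mco_inv_le (hξ j) (hnbj j).1 (hnbj j).2.1 (hnbj j).2.2
      calc M⁻¹ = (M ^ (-(1/3):ℝ))^(3:ℕ) := by
            rw [← Real.rpow_natCast (M ^ (-(1/3):ℝ)) 3, ← Real.rpow_mul hMpos.le]
            norm_num
            rw [Real.rpow_neg_one]
      _ = ∏ _j ∈ S, M ^ (-(1/3):ℝ) := by rw [Finset.prod_const, hScard]
      _ ≤ ∏ j ∈ S, mco (ξ j) ^ (-(1/3):ℝ) :=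
            Finset.prod_le_prod (fun j _ => Real.rpow_nonneg hMpos.le _) step1
      _ ≤ ∏ j ∈ S, Hfun (ξ j) :=
            Finset.prod_le_prod (fun j _ => Real.rpow_nonneg (hmcopos j).le _) step2
    by_cases hF0 : F = 0
    · have hfz : f ξ = 0 := by
        apply hvanish
        have h1 : h0sym ξ - lam = 0 := by rw [hden, hF0]; ring
        linarith
      rw [hfz]
      simp only [norm_zero]
      rw [zero_pow (two_ne_zero), zero_div]
      exact mul_nonneg hC0 (Finset.prod_nonneg (fun j _ => by
        split
        · exact Hfun_nonneg _
        · exact zero_le_one))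
    · obtain ⟨z, hz12, hz0, hzb⟩ := master d k hd hkd' ξ hξ i hi'
      rw [← hF, ← hM] at hzb
      have hzcube : z ∈ cube := hmemcube.2 hz12
      have hfb : ‖f ξ‖ ≤ L * ‖ξ - z‖ :=
        hlipest ξ hcubeξ z hzcube (by rw [hz0, hlam])
      have hsqMpos : 0 < Real.sqrt M := Real.sqrt_pos.2 hMpos
      have hnz : ‖ξ - z‖ ≤ 2*d*|F| / Real.sqrt M := by
        rw [le_div_iff₀ hsqMpos]; exact hzb
      have habs2 : ‖f ξ‖^2 ≤ (L * (2*d*|F| / Real.sqrt M))^2 := by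
        apply pow_le_pow_left₀ (norm_nonneg _)
        exact le_trans hfb (mul_le_mul_of_nonneg_left hnz hL0)
      have hFsq : 0 < (4*F)^2 := by
        apply lt_of_le_of_ne (sq_nonneg _)
        symm
        apply pow_ne_zero
        intro h
        exact hF0 (by linarith)
      calc ‖f ξ‖^2 / (h0sym ξ - lam)^2
          = ‖f ξ‖^2 / (4*F)^2 := by rw [hden]
      _ ≤ (L * (2*d*|F| / Real.sqrt M))^2 / (4*F)^2 := (div_le_div_iff_of_pos_right hFsq).2 habs2
      _ = C * M⁻¹ := by
          have hnum : (L * (2*d*|F| / Real.sqrt M))^2 = L^2 * (4*(d:ℝ)^2) * F^2 / M := by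
            rw [mul_pow, div_pow, mul_pow, mul_pow, sq_abs, Real.sq_sqrt hMpos.le]
            ring
          rw [hnum, hC]
          have hMne : M ≠ 0 := ne_of_gt hMpos
          field_simp
      _ ≤ C * ∏ j : Fin d, (if (j:ℕ) < 3 then Hfun (ξ j) else 1) :=
          mul_le_mul_of_nonneg_left hprod_le hC0
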